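/- Let f : ℝ → ℝ be a convex function and let A, B be n×n Hermitian complex matrices. Then for every j ≥ 1 with 2j−1 ≤ n, λ_{2j-1}(f((A+B)/2)) ≤ λ_j((f(A)+f(B))/2), where λ_j(·) denotes the j-th largest eigenvalue counted with multiplicity. -/

import Mathlib

open Matrix

/-- The `j`-th largest eigenvalue of a Hermitian matrix (`0`-indexed, so `eigDesc hA ⟨0, _⟩`
is the largest), counted with multiplicity. -/
noncomputable def eigDesc {n : ℕ} {A : Matrix (Fin n) (Fin n) ℂ} (hA : A.IsHermitian)
    (j : Fin n) : ℝ :=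
  hA.eigenvalues (Tuple.sort hA.eigenvalues j.rev)

/-- Applying a real function to a Hermitian matrix via the functional calculus yields a
Hermitian matrix. -/
lemma isHermitian_cfc {n : ℕ} {A : Matrix (Fin n) (Fin n) ℂ} (hA : A.IsHermitian)
    (f : ℝ → ℝ) : (hA.cfc f).IsHermitian := by
  rw [← hA.cfc_eq]
  exact cfc_predicate f A

lemma isHermitian_half_smul {n : ℕ} {X : Matrix (Fin n) (Fin n) ℂ} (hX : X.IsHermitian) :
    ((2 : ℝ)⁻¹ • X).IsHermitian := by
  show _ = _
  rw [Matrix.conjTranspose_smul, star_trivial, hX.eq]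

lemma isHermitian_sum_conj {m n : ℕ} {A : Fin m → Matrix (Fin n) (Fin n) ℂ}
    (Z : Fin m → Matrix (Fin n) (Fin n) ℂ) (hA : ∀ i, (A i).IsHermitian) :
    (∑ i, (Z i)ᴴ * A i * Z i).IsHermitian := by
  show _ = _
  rw [Matrix.conjTranspose_sum]
  exact Finset.sum_congr rfl fun i _ => (isHermitian_conjTranspose_mul_mul (Z i) (hA i)).eq


section AuxEig
open Module

noncomputable def qf {n : ℕ} (X : Matrix (Fin n) (Fin n) ℂ) (x : EuclideanSpace ℂ (Fin n)) : ℝ :=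
  (star (x : Fin n → ℂ) ⬝ᵥ (X *ᵥ x)).re

variable {n : ℕ}

lemma cfc_mulVec {X : Matrix (Fin n) (Fin n) ℂ} (hX : X.IsHermitian) (f : ℝ → ℝ)
    (i : Fin n) :
    (hX.cfc f) *ᵥ ⇑(hX.eigenvectorBasis i) =
      ((f (hX.eigenvalues i) : ℂ)) • ⇑(hX.eigenvectorBasis i) := by
  rw [Matrix.IsHermitian.cfc, Unitary.conjStarAlgAut_apply, ← mulVec_mulVec, ← mulVec_mulVec,
    hX.star_eigenvectorUnitary_mulVec, Matrix.diagonal_mulVec_single]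
  have h1 : (Pi.single i (((RCLike.ofReal ∘ f ∘ hX.eigenvalues) i : ℂ) * 1) : Fin n → ℂ)
      = ((f (hX.eigenvalues i)):ℂ) • (Pi.single i 1 : Fin n → ℂ) := by
    ext k
    rcases eq_or_ne k i with rfl | hk
    · simp
    · simp [Pi.single_eq_of_ne hk]
  rw [h1, mulVec_smul, hX.eigenvectorUnitary_mulVec]

lemma inner_mulVec_eq {X : Matrix (Fin n) (Fin n) ℂ} (hX : X.IsHermitian)
    (u : OrthonormalBasis (Fin n) ℂ (EuclideanSpace ℂ (Fin n))) (ν : Fin n → ℝ)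
    (hXu : ∀ i, X *ᵥ ⇑(u i) = ((ν i : ℂ)) • ⇑(u i)) (x : EuclideanSpace ℂ (Fin n)) :
    (star (x : Fin n → ℂ) ⬝ᵥ (X *ᵥ x)) = ∑ i, ((ν i : ℂ) * (‖u.repr x i‖^2 : ℝ)) := by
  set y : EuclideanSpace ℂ (Fin n) := (WithLp.equiv 2 (Fin n → ℂ)).symm (X *ᵥ x) with hy
  have h0 : (star (x : Fin n → ℂ) ⬝ᵥ (X *ᵥ x)) = @inner ℂ _ _ x y := by
    simp [hy, PiLp.inner_apply, dotProduct, mul_comm]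
  rw [h0, ← u.repr.inner_map_map x y, PiLp.inner_apply]
  congr 1
  ext i
  have hrepr : u.repr y i = (ν i : ℂ) * u.repr x i := by
    rw [u.repr_apply_apply y i]
    have h1 : @inner ℂ _ _ (u i) y = star (⇑(u i) : Fin n → ℂ) ⬝ᵥ (X *ᵥ x) := by
        simp [hy, PiLp.inner_apply, dotProduct, mul_comm]
    rw [h1, dotProduct_mulVec]
    have h2 : star (⇑(u i) : Fin n → ℂ) ᵥ* X = (ν i : ℂ) • star (⇑(u i) : Fin n → ℂ) := by
      have := star_mulVec (M := X) (v := (⇑(u i) : Fin n → ℂ))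
      rw [hX.eq] at this
      rw [← this, hXu i, star_smul]
      simp
    rw [h2, smul_dotProduct]
    have h3 : star (⇑(u i) : Fin n → ℂ) ⬝ᵥ (x : Fin n → ℂ) = @inner ℂ _ _ (u i) x := by
        simp [PiLp.inner_apply, dotProduct, mul_comm]
    rw [smul_eq_mul, h3, ← u.repr_apply_apply x i]
  rw [hrepr, RCLike.inner_apply]
  have h4 : (starRingEnd ℂ) (u.repr x i) * u.repr x i = (‖u.repr x i‖^2 : ℝ) := by
    rw [RCLike.conj_mul]
    norm_cast
  rw [mul_assoc, mul_comm (u.repr x i) ((starRingEnd ℂ) (u.repr x i)), h4]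

lemma qf_eq_sum {X : Matrix (Fin n) (Fin n) ℂ} (hX : X.IsHermitian)
    (u : OrthonormalBasis (Fin n) ℂ (EuclideanSpace ℂ (Fin n))) (ν : Fin n → ℝ)
    (hXu : ∀ i, X *ᵥ ⇑(u i) = ((ν i : ℂ)) • ⇑(u i)) (x : EuclideanSpace ℂ (Fin n)) :
    qf X x = ∑ i, ν i * ‖u.repr x i‖^2 := by
  rw [qf, inner_mulVec_eq hX u ν hXu]
  rw [show ∑ i, ((ν i : ℂ) * (‖u.repr x i‖^2 : ℝ)) = ((∑ i, ν i * ‖u.repr x i‖^2 : ℝ) : ℂ) by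
    push_cast; ring]
  exact Complex.ofReal_re _

lemma norm_sq_eq_sum (u : OrthonormalBasis (Fin n) ℂ (EuclideanSpace ℂ (Fin n)))
    (x : EuclideanSpace ℂ (Fin n)) : ‖x‖^2 = ∑ i, ‖u.repr x i‖^2 := by
  rw [← u.repr.norm_map x, EuclideanSpace.norm_eq, Real.sq_sqrt (by positivity)]

noncomputable def spanS (u : OrthonormalBasis (Fin n) ℂ (EuclideanSpace ℂ (Fin n)))
    (S : Finset (Fin n)) : Submodule ℂ (EuclideanSpace ℂ (Fin n)) :=
  Submodule.span ℂ (u '' ↑S)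

lemma finrank_spanS (u : OrthonormalBasis (Fin n) ℂ (EuclideanSpace ℂ (Fin n)))
    (S : Finset (Fin n)) : finrank ℂ (spanS u S) = S.card := by
  classical
  rw [spanS, show u '' ↑S = ↑(S.image u) by rw [Finset.coe_image],
    finrank_span_finset_eq_card, Finset.card_image_of_injective _
      u.orthonormal.linearIndependent.injective]
  refine ((linearIndepOn_id_range_iff u.orthonormal.linearIndependent.injective).mpr
    u.orthonormal.linearIndependent).mono ?_
  intro y hy
  obtain ⟨j, -, rfl⟩ := Finset.mem_image.mp hy
  exact ⟨j, rfl⟩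

lemma repr_eq_zero_of_mem_spanS (u : OrthonormalBasis (Fin n) ℂ (EuclideanSpace ℂ (Fin n)))
    {S : Finset (Fin n)} {x : EuclideanSpace ℂ (Fin n)} (hx : x ∈ spanS u S) {i : Fin n}
    (hi : i ∉ S) : u.repr x i = 0 := by
  induction hx using Submodule.span_induction with
  | mem y hy =>
    obtain ⟨j, hj, rfl⟩ := hy
    rw [u.repr_self, EuclideanSpace.single_apply]
    exact if_neg (by rintro rfl; exact hi hj)
  | zero => simp
  | add y z _ _ hy hz => rw [map_add]; simp [hy, hz]
  | smul c y _ hy => rw [_root_.map_smul]; simp [hy]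

lemma exists_ne_zero_mem_inf (V W : Submodule ℂ (EuclideanSpace ℂ (Fin n)))
    (h : n < finrank ℂ V + finrank ℂ W) : ∃ x, x ∈ V ∧ x ∈ W ∧ x ≠ 0 := by
  have h1 := Submodule.finrank_sup_add_finrank_inf_eq V W
  have h2 : finrank ℂ ↥(V ⊔ W) ≤ n := by
    simpa [finrank_euclideanSpace_fin] using Submodule.finrank_le (V ⊔ W)
  have h3 : 0 < finrank ℂ ↥(V ⊓ W) := by omega
  have := Module.nontrivial_of_finrank_pos h3
  obtain ⟨⟨x, hx⟩, hne⟩ := exists_ne (0 : ↥(V ⊓ W))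
  exact ⟨x, (Submodule.mem_inf.mp hx).1, (Submodule.mem_inf.mp hx).2,
    by simpa [Submodule.mk_eq_zero] using hne⟩

lemma sum_restrict {S : Finset (Fin n)} (g : Fin n → ℝ)
    (u : OrthonormalBasis (Fin n) ℂ (EuclideanSpace ℂ (Fin n)))
    {x : EuclideanSpace ℂ (Fin n)} (hx : x ∈ spanS u S) :
    ∑ i, g i * ‖u.repr x i‖^2 = ∑ i ∈ S, g i * ‖u.repr x i‖^2 :=
  (Finset.sum_subset (Finset.subset_univ S) (fun i _ hi => by
    rw [repr_eq_zero_of_mem_spanS u hx hi]; simp)).symm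

lemma qf_le_on_spanS {X : Matrix (Fin n) (Fin n) ℂ} (hX : X.IsHermitian)
    (u : OrthonormalBasis (Fin n) ℂ (EuclideanSpace ℂ (Fin n))) (ν : Fin n → ℝ)
    (hXu : ∀ i, X *ᵥ ⇑(u i) = ((ν i : ℂ)) • ⇑(u i)) {S : Finset (Fin n)} {μ : ℝ}
    (hμ : ∀ i ∈ S, ν i ≤ μ) {x : EuclideanSpace ℂ (Fin n)} (hx : x ∈ spanS u S) :
    qf X x ≤ μ * ‖x‖^2 := by
  rw [qf_eq_sum hX u ν hXu, norm_sq_eq_sum u x, sum_restrict ν u hx,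
    show ∑ i, ‖u.repr x i‖^2 = ∑ i, (1:ℝ) * ‖u.repr x i‖^2 by simp,
    sum_restrict (fun _ => (1:ℝ)) u hx, Finset.mul_sum]
  refine Finset.sum_le_sum fun i hi => ?_
  have := hμ i hi
  have h0 : (0:ℝ) ≤ ‖u.repr x i‖^2 := by positivity
  nlinarith

lemma qf_ge_on_spanS {X : Matrix (Fin n) (Fin n) ℂ} (hX : X.IsHermitian)
    (u : OrthonormalBasis (Fin n) ℂ (EuclideanSpace ℂ (Fin n))) (ν : Fin n → ℝ)
    (hXu : ∀ i, X *ᵥ ⇑(u i) = ((ν i : ℂ)) • ⇑(u i)) {S : Finset (Fin n)} {c : ℝ}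
    (hc : ∀ i ∈ S, c ≤ ν i) {x : EuclideanSpace ℂ (Fin n)} (hx : x ∈ spanS u S) :
    c * ‖x‖^2 ≤ qf X x := by
  rw [qf_eq_sum hX u ν hXu, norm_sq_eq_sum u x, sum_restrict ν u hx,
    show ∑ i, ‖u.repr x i‖^2 = ∑ i, (1:ℝ) * ‖u.repr x i‖^2 by simp,
    sum_restrict (fun _ => (1:ℝ)) u hx, Finset.mul_sum]
  refine Finset.sum_le_sum fun i hi => ?_
  have := hc i hi
  have h0 : (0:ℝ) ≤ ‖u.repr x i‖^2 := by positivity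
  nlinarith

lemma eig_mulVec_basis {X : Matrix (Fin n) (Fin n) ℂ} (hX : X.IsHermitian) (i : Fin n) :
    X *ᵥ ⇑(hX.eigenvectorBasis i) = ((hX.eigenvalues i : ℂ)) • ⇑(hX.eigenvectorBasis i) := by
  rw [hX.mulVec_eigenvectorBasis]
  ext j
  simp [Complex.real_smul]

/-- Min-max style upper bound for descending eigenvalues. -/
lemma eigDesc_le_of_subspace {X : Matrix (Fin n) (Fin n) ℂ} (hX : X.IsHermitian) (k : Fin n)
    (μ : ℝ) (W : Submodule ℂ (EuclideanSpace ℂ (Fin n))) (hW : n ≤ finrank ℂ W + k)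
    (hq : ∀ x ∈ W, qf X x ≤ μ * ‖x‖^2) : eigDesc hX k ≤ μ := by
  classical
  set u := hX.eigenvectorBasis with hu
  set ν := hX.eigenvalues with hν
  set σ := Tuple.sort ν with hσ
  set S : Finset (Fin n) := (Finset.Ici k.rev).image σ with hS
  have hcard : S.card = k + 1 := by
    rw [hS, Finset.card_image_of_injective _ σ.injective, Fin.card_Ici, Fin.val_rev]
    omega
  have hrank : finrank ℂ (spanS u S) = k + 1 := by rw [finrank_spanS, hcard]
  obtain ⟨x, hxV, hxW, hx0⟩ := exists_ne_zero_mem_inf (spanS u S) W (by rw [hrank]; omega)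
  have hlow : ∀ i ∈ S, eigDesc hX k ≤ ν i := by
    intro i hi
    obtain ⟨p, hp, rfl⟩ := Finset.mem_image.mp hi
    exact Tuple.monotone_sort ν (Finset.mem_Ici.mp hp)
  have h1 : eigDesc hX k * ‖x‖^2 ≤ qf X x :=
    qf_ge_on_spanS hX u ν (eig_mulVec_basis hX) hlow hxV
  have h2 : qf X x ≤ μ * ‖x‖^2 := hq x hxW
  have h3 : (0:ℝ) < ‖x‖^2 := by
    have : ‖x‖ ≠ 0 := fun h => hx0 (norm_eq_zero.mp h)
    positivity
  nlinarith

/-- Peierls inequality. -/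
lemma peierls {X : Matrix (Fin n) (Fin n) ℂ} (hX : X.IsHermitian) {f : ℝ → ℝ}
    (hf : ConvexOn ℝ Set.univ f) {x : EuclideanSpace ℂ (Fin n)} (hx : ‖x‖ = 1) :
    f (qf X x) ≤ qf (hX.cfc f) x := by
  set u := hX.eigenvectorBasis with hu
  set ν := hX.eigenvalues with hν
  rw [qf_eq_sum hX u ν (eig_mulVec_basis hX),
    qf_eq_sum (isHermitian_cfc hX f) u (f ∘ ν) (cfc_mulVec hX f)]
  have hsum : ∑ i, ‖u.repr x i‖^2 = 1 := by rw [← norm_sq_eq_sum u x, hx]; norm_num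
  have := hf.map_sum_le (t := Finset.univ) (w := fun i => ‖u.repr x i‖^2) (p := ν)
    (fun i _ => by positivity) hsum (fun i _ => Set.mem_univ _)
  simpa [smul_eq_mul, mul_comm] using this

lemma qf_half_add (P Q : Matrix (Fin n) (Fin n) ℂ) (x : EuclideanSpace ℂ (Fin n)) :
    qf ((2:ℝ)⁻¹ • (P + Q)) x = 2⁻¹ * (qf P x + qf Q x) := by
  simp only [qf, Matrix.smul_mulVec, Matrix.add_mulVec, dotProduct_smul, dotProduct_add]
  simp [Complex.real_smul, Complex.add_re]
  ring

end AuxEig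

set_option maxHeartbeats 2000000 in
/-- **Corollary 2.3, eigenvalue form.** If `f` is convex and `A, B` are Hermitian, then
`λ_{2j-1}(f((A+B)/2)) ≤ λ_j((f(A)+f(B))/2)` (decreasing eigenvalues, `1`-based). -/
theorem eig_cfc_mean_le
    {n : ℕ} (f : ℝ → ℝ) (hf : ConvexOn ℝ Set.univ f)
    (A B : Matrix (Fin n) (Fin n) ℂ) (hA : A.IsHermitian) (hB : B.IsHermitian)
    (j : ℕ) (hj : 1 ≤ j) (hjn : 2 * j - 1 ≤ n) :
    eigDesc (isHermitian_cfc (isHermitian_half_smul (hA.add hB)) f)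
        ⟨2 * j - 1 - 1, by omega⟩ ≤
      eigDesc (isHermitian_half_smul ((isHermitian_cfc hA f).add (isHermitian_cfc hB f)))
        ⟨j - 1, by omega⟩ := by
  classical
  have hn : 1 ≤ n := by omega
  set hC := isHermitian_half_smul (hA.add hB) with hhC
  set hD := isHermitian_half_smul ((isHermitian_cfc hA f).add (isHermitian_cfc hB f)) with hhD
  set jm : Fin n := ⟨j - 1, by omega⟩ with hjmdef
  set k2 : Fin n := ⟨2 * j - 1 - 1, by omega⟩ with hk2def
  have hjmval : (jm : ℕ) = j - 1 := rfl
  have hk2val : (k2 : ℕ) = 2 * j - 1 - 1 := rfl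
  set μ : ℝ := eigDesc hD jm with hμ
  set uD := hD.eigenvectorBasis with huD
  set νD := hD.eigenvalues with hνD
  set σD := Tuple.sort νD with hσD
  set SD : Finset (Fin n) := (Finset.Iic jm.rev).image σD with hSD
  set M := spanS uD SD with hMdef
  have hMrank : Module.finrank ℂ M = n - j + 1 := by
    rw [hMdef, finrank_spanS, hSD, Finset.card_image_of_injective _ σD.injective,
      Fin.card_Iic, Fin.val_rev, hjmval]
    omega
  have hDle : ∀ x ∈ M, qf ((2:ℝ)⁻¹ • (hA.cfc f + hB.cfc f)) x ≤ μ * ‖x‖^2 := by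
    intro x hx
    refine qf_le_on_spanS hD uD νD (eig_mulVec_basis hD) ?_ hx
    intro i hi
    obtain ⟨p, hp, rfl⟩ := Finset.mem_image.mp hi
    exact Tuple.monotone_sort νD (Finset.mem_Iic.mp hp)
  have key : ∀ x ∈ M, ‖x‖ = 1 → f (qf ((2:ℝ)⁻¹ • (A + B)) x) ≤ μ := by
    intro x hx hx1
    have h1 : qf ((2:ℝ)⁻¹ • (A + B)) x = 2⁻¹ * qf A x + 2⁻¹ * qf B x := by
      rw [qf_half_add A B x]; ring
    have h2 := peierls hA hf hx1
    have h3 := peierls hB hf hx1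
    have h4 : f (2⁻¹ * qf A x + 2⁻¹ * qf B x) ≤ 2⁻¹ * f (qf A x) + 2⁻¹ * f (qf B x) := by
      have := hf.2 (Set.mem_univ (qf A x)) (Set.mem_univ (qf B x))
        (by norm_num : (0:ℝ) ≤ 2⁻¹) (by norm_num : (0:ℝ) ≤ 2⁻¹) (by norm_num)
      simpa [smul_eq_mul] using this
    have h5 : qf ((2:ℝ)⁻¹ • (hA.cfc f + hB.cfc f)) x
        = 2⁻¹ * (qf (hA.cfc f) x + qf (hB.cfc f) x) := qf_half_add _ _ x
    have h6 := hDle x hx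
    rw [hx1] at h6
    rw [h1]
    calc f (2⁻¹ * qf A x + 2⁻¹ * qf B x)
        ≤ 2⁻¹ * f (qf A x) + 2⁻¹ * f (qf B x) := h4
      _ ≤ 2⁻¹ * qf (hA.cfc f) x + 2⁻¹ * qf (hB.cfc f) x := by
          have h2' := h2; have h3' := h3; nlinarith
      _ = qf ((2:ℝ)⁻¹ • (hA.cfc f + hB.cfc f)) x := by rw [h5]; ring
      _ ≤ μ := by simpa using h6
  -- C-side eigen data
  set uC := hC.eigenvectorBasis with huC
  set νC := hC.eigenvalues with hνC
  set σC := Tuple.sort νC with hσC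
  -- upper test vector
  set Shi : Finset (Fin n) := (Finset.Ici jm.rev).image σC with hShi
  have hShirank : Module.finrank ℂ (spanS uC Shi) = j := by
    rw [finrank_spanS, hShi, Finset.card_image_of_injective _ σC.injective,
      Fin.card_Ici, Fin.val_rev, hjmval]
    omega
  obtain ⟨y, hyV, hyM, hy0⟩ := exists_ne_zero_mem_inf (spanS uC Shi) M
    (by rw [hShirank, hMrank]; omega)
  have hyn : ‖y‖ ≠ 0 := fun h => hy0 (norm_eq_zero.mp h)
  set xp : EuclideanSpace ℂ (Fin n) := ((‖y‖⁻¹ : ℝ) : ℂ) • y with hxp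
  have hxp1 : ‖xp‖ = 1 := by
    rw [hxp, norm_smul]
    simp [norm_inv, hyn]
  have hxpV : xp ∈ spanS uC Shi := Submodule.smul_mem _ _ hyV
  have hxpM : xp ∈ M := Submodule.smul_mem _ _ hyM
  set b : ℝ := qf ((2:ℝ)⁻¹ • (A + B)) xp with hbdef
  have hb : νC (σC jm.rev) ≤ b := by
    have := qf_ge_on_spanS hC uC νC (eig_mulVec_basis hC)
      (fun i hi => by
        obtain ⟨p, hp, rfl⟩ := Finset.mem_image.mp hi
        exact Tuple.monotone_sort νC (Finset.mem_Ici.mp hp)) hxpV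
    rw [hxp1] at this
    rw [one_pow, mul_one] at this
    exact this
  have fb : f b ≤ μ := key xp hxpM hxp1
  -- lower test vector
  set Slo : Finset (Fin n) := (Finset.Iic jm).image σC with hSlo
  have hSlorank : Module.finrank ℂ (spanS uC Slo) = j := by
    rw [finrank_spanS, hSlo, Finset.card_image_of_injective _ σC.injective,
      Fin.card_Iic, hjmval]
    omega
  obtain ⟨z, hzV, hzM, hz0⟩ := exists_ne_zero_mem_inf (spanS uC Slo) M
    (by rw [hSlorank, hMrank]; omega)
  have hzn : ‖z‖ ≠ 0 := fun h => hz0 (norm_eq_zero.mp h)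
  set xm : EuclideanSpace ℂ (Fin n) := ((‖z‖⁻¹ : ℝ) : ℂ) • z with hxm
  have hxm1 : ‖xm‖ = 1 := by
    rw [hxm, norm_smul]
    simp [norm_inv, hzn]
  have hxmV : xm ∈ spanS uC Slo := Submodule.smul_mem _ _ hzV
  have hxmM : xm ∈ M := Submodule.smul_mem _ _ hzM
  set a : ℝ := qf ((2:ℝ)⁻¹ • (A + B)) xm with hadef
  have ha : a ≤ νC (σC jm) := by
    have := qf_le_on_spanS hC uC νC (eig_mulVec_basis hC)
      (fun i hi => by
        obtain ⟨p, hp, rfl⟩ := Finset.mem_image.mp hi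
        exact Tuple.monotone_sort νC (Finset.mem_Iic.mp hp)) hxmV
    rw [hxm1] at this
    rw [one_pow, mul_one] at this
    exact this
  have fa : f a ≤ μ := key xm hxmM hxm1
  have hmid : νC (σC jm) ≤ νC (σC jm.rev) := by
    refine Tuple.monotone_sort νC ?_
    rw [Fin.le_def, Fin.val_rev]
    simp only [hjmdef, Fin.val_mk]
    omega
  have hab : a ≤ b := le_trans ha (le_trans hmid hb)
  -- middle subspace
  set Smid : Finset (Fin n) := (Finset.Icc jm jm.rev).image σC with hSmid
  have hSmidrank : Module.finrank ℂ (spanS uC Smid) = n + 2 - 2 * j := by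
    rw [finrank_spanS, hSmid, Finset.card_image_of_injective _ σC.injective,
      Fin.card_Icc, Fin.val_rev, hjmval]
    omega
  have hWq : ∀ x ∈ spanS uC Smid, qf (hC.cfc f) x ≤ μ * ‖x‖^2 := by
    intro x hx
    refine qf_le_on_spanS (isHermitian_cfc hC f) uC (f ∘ νC) (cfc_mulVec hC f) ?_ hx
    intro i hi
    obtain ⟨p, hp, rfl⟩ := Finset.mem_image.mp hi
    obtain ⟨hp1, hp2⟩ := Finset.mem_Icc.mp hp
    have hv1 : a ≤ νC (σC p) := le_trans ha (Tuple.monotone_sort νC hp1)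
    have hv2 : νC (σC p) ≤ b := le_trans (Tuple.monotone_sort νC hp2) hb
    have hseg : f (νC (σC p)) ≤ max (f a) (f b) := by
      refine hf.le_on_segment (Set.mem_univ a) (Set.mem_univ b) ?_
      rw [segment_eq_Icc hab]
      exact ⟨hv1, hv2⟩
    exact hseg.trans (max_le fa fb)
  exact eigDesc_le_of_subspace (isHermitian_cfc hC f) k2 μ (spanS uC Smid)
    (by rw [hSmidrank, hk2val]; omega) hWq
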